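/- Let ι be a nonempty finite type and let Q be a fixed real ι×ι matrix. Let (P_N)_{N≥1} be a sequence of real ι×ι matrices with ‖P_N‖ ≤ 1 for all N (in a fixed submultiplicative matrix norm with ‖I‖ = 1, e.g. the ℓ∞→ℓ∞ operator norm), and let (c_N)_{N≥1} be a sequence of strictly positive reals with c_N → 0 as N → ∞. Assume that ‖P_N − (I + c_N Q)‖ = o(c_N) as N → ∞. Then for every t ≥ 0, the matrix powers P_N^{⌊t/c_N⌋} converge to the matrix exponential exp(tQ) as N → ∞. -/

import Mathlib

open Filter Matrix

attribute [local instance] Matrix.linftyOpNormedAddCommGroup Matrix.linftyOpNormedRing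
  Matrix.linftyOpNormedAlgebra

section Aux

variable {𝔸 : Type*} [NormedRing 𝔸] [NormOneClass 𝔸] [NormedAlgebra ℝ 𝔸] [CompleteSpace 𝔸]

open NormedSpace in
lemma aux_norm_exp_le (x : 𝔸) : ‖exp x‖ ≤ Real.exp ‖x‖ := by
  have h1 := NormedSpace.exp_series_hasSum_exp' (𝕂 := ℝ) x
  have hsum := NormedSpace.norm_expSeries_summable' (𝕂 := ℝ) x
  have h2 : ‖exp x‖ ≤ ∑' n : ℕ, ‖((n.factorial : ℝ))⁻¹ • x ^ n‖ := by
    rw [← h1.tsum_eq]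
    exact norm_tsum_le_tsum_norm hsum
  refine h2.trans ?_
  have hmaj : ∀ n : ℕ, ‖((n.factorial : ℝ))⁻¹ • x ^ n‖ ≤ ‖x‖ ^ n / (n.factorial : ℝ) := by
    intro n
    rw [norm_smul, Real.norm_eq_abs, abs_of_nonneg (by positivity), div_eq_inv_mul]
    exact mul_le_mul_of_nonneg_left (norm_pow_le x n) (by positivity)
  calc ∑' n : ℕ, ‖((n.factorial : ℝ))⁻¹ • x ^ n‖ ≤ ∑' n : ℕ, ‖x‖ ^ n / (n.factorial : ℝ) :=
        Summable.tsum_le_tsum hmaj hsum (Real.summable_pow_div_factorial ‖x‖)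
    _ = Real.exp ‖x‖ := by
        rw [Real.exp_eq_exp_ℝ, NormedSpace.exp_eq_tsum_div]

open NormedSpace in
lemma aux_norm_exp_sub_one_sub_le (x : 𝔸) :
    ‖exp x - 1 - x‖ ≤ ‖x‖ ^ 2 * Real.exp ‖x‖ := by
  set f : ℕ → 𝔸 := fun n => ((n.factorial : ℝ))⁻¹ • x ^ n with hf
  have h1 : HasSum f (exp x) := NormedSpace.exp_series_hasSum_exp' (𝕂 := ℝ) x
  have h2 : HasSum (fun n => f (n + 2)) (exp x - ∑ i ∈ Finset.range 2, f i) :=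
    (hasSum_nat_add_iff' 2).mpr h1
  have hrange : ∑ i ∈ Finset.range 2, f i = 1 + x := by
    simp [hf, Finset.sum_range_succ, Nat.factorial]
  have heq : exp x - 1 - x = ∑' n : ℕ, f (n + 2) := by
    rw [h2.tsum_eq, hrange, sub_sub]
  have hsum : Summable fun n : ℕ => ‖f (n + 2)‖ :=
    (summable_nat_add_iff 2).mpr (NormedSpace.norm_expSeries_summable' (𝕂 := ℝ) x)
  have hmaj : ∀ n : ℕ, ‖f (n + 2)‖ ≤ ‖x‖ ^ 2 * (‖x‖ ^ n / (n.factorial : ℝ)) := by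
    intro n
    have h3 : ‖f (n + 2)‖ ≤ ‖x‖ ^ (n + 2) / ((n + 2).factorial : ℝ) := by
      rw [hf, norm_smul, Real.norm_eq_abs, abs_of_nonneg (by positivity), div_eq_inv_mul]
      exact mul_le_mul_of_nonneg_left (norm_pow_le x (n + 2)) (by positivity)
    refine h3.trans ?_
    have h4 : ((n.factorial : ℝ)) ≤ (((n + 2).factorial : ℝ) : ℝ) := by
      exact_mod_cast Nat.factorial_le (by omega)
    have h5 : ‖x‖ ^ (n + 2) = ‖x‖ ^ 2 * ‖x‖ ^ n := by ring
    rw [h5, mul_div_assoc]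
    refine mul_le_mul_of_nonneg_left ?_ (by positivity)
    exact div_le_div_of_nonneg_left (by positivity) (by positivity) h4
  have hsum2 : Summable fun n : ℕ => ‖x‖ ^ 2 * (‖x‖ ^ n / (n.factorial : ℝ)) :=
    (Real.summable_pow_div_factorial ‖x‖).mul_left _
  calc ‖exp x - 1 - x‖ = ‖∑' n : ℕ, f (n + 2)‖ := by rw [heq]
    _ ≤ ∑' n : ℕ, ‖f (n + 2)‖ := norm_tsum_le_tsum_norm hsum
    _ ≤ ∑' n : ℕ, ‖x‖ ^ 2 * (‖x‖ ^ n / (n.factorial : ℝ)) := Summable.tsum_le_tsum hmaj hsum hsum2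
    _ = ‖x‖ ^ 2 * ∑' n : ℕ, ‖x‖ ^ n / (n.factorial : ℝ) := tsum_mul_left
    _ = ‖x‖ ^ 2 * Real.exp ‖x‖ := by
        rw [Real.exp_eq_exp_ℝ, NormedSpace.exp_eq_tsum_div]

lemma aux_norm_pow_sub_pow_le (A B : 𝔸) (m : ℝ) (hm : 1 ≤ m)
    (hA : ‖A‖ ≤ m) (hB : ‖B‖ ≤ m) :
    ∀ k : ℕ, ‖A ^ k - B ^ k‖ ≤ k * m ^ k * ‖A - B‖ := by
  intro k
  induction k with
  | zero => simp
  | succ k ih =>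
    have hd : (0 : ℝ) ≤ ‖A - B‖ := norm_nonneg _
    have hm0 : (0 : ℝ) ≤ m := le_trans zero_le_one hm
    have key : A ^ (k + 1) - B ^ (k + 1) = A * (A ^ k - B ^ k) + (A - B) * B ^ k := by
      rw [pow_succ', pow_succ']
      noncomm_ring
    have hBk : ‖B ^ k‖ ≤ m ^ k := le_trans (norm_pow_le B k) (pow_le_pow_left₀ (norm_nonneg _) hB k)
    calc ‖A ^ (k + 1) - B ^ (k + 1)‖
        ≤ ‖A * (A ^ k - B ^ k)‖ + ‖(A - B) * B ^ k‖ := by rw [key]; exact norm_add_le _ _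
      _ ≤ ‖A‖ * ‖A ^ k - B ^ k‖ + ‖A - B‖ * ‖B ^ k‖ :=
          add_le_add (norm_mul_le _ _) (norm_mul_le _ _)
      _ ≤ m * (k * m ^ k * ‖A - B‖) + ‖A - B‖ * m ^ k := by
          refine add_le_add ?_ (mul_le_mul_of_nonneg_left hBk hd)
          exact mul_le_mul hA ih (by positivity) hm0
      _ ≤ (k + 1 : ℕ) * m ^ (k + 1) * ‖A - B‖ := by
          have hmk : m ^ k ≤ m ^ (k + 1) := pow_le_pow_right₀ hm (by omega)
          have h1 : ‖A - B‖ * m ^ k ≤ ‖A - B‖ * m ^ (k + 1) :=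
            mul_le_mul_of_nonneg_left hmk hd
          have h2 : m * (↑k * m ^ k * ‖A - B‖) = ↑k * m ^ (k + 1) * ‖A - B‖ := by
            rw [pow_succ]; ring
          have h3 : ((k + 1 : ℕ) : ℝ) * m ^ (k + 1) * ‖A - B‖
              = ↑k * m ^ (k + 1) * ‖A - B‖ + m ^ (k + 1) * ‖A - B‖ := by push_cast; ring
          linarith

end Aux

/-- If `P N` are matrices with `‖P N‖ ≤ 1`, `c N > 0`, `c N → 0`, and
`‖P N - (I + c N • Q)‖ = o(c N)`, then `P N ^ ⌊t / c N⌋ → exp (t • Q)` for every `t ≥ 0`.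
The norm is the ℓ∞→ℓ∞ operator norm on matrices. -/
theorem stmt0 {ι : Type*} [Fintype ι] [Nonempty ι] [DecidableEq ι]
    (Q : Matrix ι ι ℝ) (P : ℕ → Matrix ι ι ℝ) (c : ℕ → ℝ)
    (hc_pos : ∀ N, 0 < c N)
    (hc0 : Tendsto c atTop (nhds 0))
    (hPnorm : ∀ N, ‖P N‖ ≤ 1)
    (hTaylor : Tendsto (fun N => ‖P N - (1 + c N • Q)‖ / c N) atTop (nhds 0))
    (t : ℝ) (ht : 0 ≤ t) :
    Tendsto (fun N => P N ^ (⌊t / c N⌋₊)) atTop (nhds (NormedSpace.exp (t • Q))) := by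
  haveI : CompleteSpace (Matrix ι ι ℝ) :=
    FiniteDimensional.complete ℝ (Matrix ι ι ℝ)
  set q : ℝ := ‖Q‖ with hq
  have hq0 : 0 ≤ q := norm_nonneg Q
  set k : ℕ → ℕ := fun N => ⌊t / c N⌋₊ with hkdef
  set d : ℕ → ℝ := fun N => ‖P N - (1 + c N • Q)‖ with hddef
  have hd0 : ∀ N, 0 ≤ d N := fun N => norm_nonneg _
  have hk_le : ∀ N, (k N : ℝ) ≤ t / c N := fun N =>
    Nat.floor_le (div_nonneg ht (hc_pos N).le)
  have hkc_le : ∀ N, (k N : ℝ) * c N ≤ t := by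
    intro N
    have := (le_div_iff₀ (hc_pos N)).mp (hk_le N)
    linarith [this]
  have hkc_gt : ∀ N, t - c N ≤ (k N : ℝ) * c N := by
    intro N
    have h1 : t / c N - 1 < (k N : ℝ) := Nat.sub_one_lt_floor (t / c N)
    have h2 : (t / c N - 1) * c N ≤ (k N : ℝ) * c N :=
      mul_le_mul_of_nonneg_right h1.le (hc_pos N).le
    have h3 : (t / c N - 1) * c N = t - c N := by
      rw [sub_mul, div_mul_cancel₀ _ (hc_pos N).ne', one_mul]
    linarith [h2, h3.symm.le]
  have hkc_tendsto : Tendsto (fun N => (k N : ℝ) * c N) atTop (nhds t) := by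
    have hlow : Tendsto (fun N => t - c N) atTop (nhds t) := by
      simpa using tendsto_const_nhds.sub hc0
    exact tendsto_of_tendsto_of_tendsto_of_le_of_le hlow tendsto_const_nhds hkc_gt hkc_le
  -- the three error terms
  set f1 : ℕ → ℝ := fun N => t * Real.exp (t * q) * (d N / c N) with hf1
  set f2 : ℕ → ℝ := fun N => t * q ^ 2 * (c N * Real.exp ((t + c N) * q)) with hf2
  set f3 : ℕ → ℝ := fun N =>
    ‖NormedSpace.exp (((k N : ℝ) * c N) • Q) - NormedSpace.exp (t • Q)‖ with hf3
  -- limits of the error terms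
  have hlim1 : Tendsto f1 atTop (nhds 0) := by
    have := hTaylor.const_mul (t * Real.exp (t * q))
    simpa [hf1, mul_comm] using this
  have hlim2 : Tendsto f2 atTop (nhds 0) := by
    have hexp : Tendsto (fun N => Real.exp ((t + c N) * q)) atTop (nhds (Real.exp (t * q))) := by
      apply Real.continuous_exp.continuousAt.tendsto.comp
      simpa using ((tendsto_const_nhds.add hc0).mul_const q)
    have := (hc0.mul hexp).const_mul (t * q ^ 2)
    simpa [hf2] using this
  have hlim3 : Tendsto f3 atTop (nhds 0) := by
    have hE : Tendsto (fun N => NormedSpace.exp (((k N : ℝ) * c N) • Q)) atTop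
        (nhds (NormedSpace.exp (t • Q))) :=
      (NormedSpace.exp_continuous.tendsto _).comp (hkc_tendsto.smul_const Q)
    exact tendsto_iff_norm_sub_tendsto_zero.mp hE
  -- bounds on auxiliary quantities
  have hnorm1cQ : ∀ N, ‖(1 : Matrix ι ι ℝ) + c N • Q‖ ≤ 1 + c N * q := by
    intro N
    refine (norm_add_le _ _).trans ?_
    rw [norm_one, norm_smul, Real.norm_eq_abs, abs_of_pos (hc_pos N)]
  have hexp_pow : ∀ N, Real.exp (c N * q) ^ (k N) ≤ Real.exp (t * q) := by
    intro N
    rw [← Real.exp_nat_mul]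
    apply Real.exp_le_exp.mpr
    have : (k N : ℝ) * (c N * q) = ((k N : ℝ) * c N) * q := by ring
    rw [this]
    exact mul_le_mul_of_nonneg_right (hkc_le N) hq0
  -- bound 1
  have hbound1 : ∀ N, ‖P N ^ (k N) - (1 + c N • Q) ^ (k N)‖ ≤ f1 N := by
    intro N
    set m : ℝ := 1 + c N * q with hm
    have hm1 : 1 ≤ m := by
      have : 0 ≤ c N * q := mul_nonneg (hc_pos N).le hq0
      linarith
    have hmexp : m ≤ Real.exp (c N * q) := by
      have := Real.add_one_le_exp (c N * q)
      linarith
    have h1 := aux_norm_pow_sub_pow_le (P N) (1 + c N • Q) m hm1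
      ((hPnorm N).trans (by linarith [mul_nonneg (hc_pos N).le hq0]))
      (hnorm1cQ N) (k N)
    refine h1.trans ?_
    have hmk : m ^ (k N) ≤ Real.exp (t * q) := by
      refine le_trans ?_ (hexp_pow N)
      exact pow_le_pow_left₀ (by linarith) hmexp (k N)
    have step : (k N : ℝ) * m ^ (k N) * d N ≤ (t / c N) * Real.exp (t * q) * d N := by
      apply mul_le_mul_of_nonneg_right _ (hd0 N)
      exact mul_le_mul (hk_le N) hmk (pow_nonneg (by linarith) _)
        (div_nonneg ht (hc_pos N).le)
    refine step.trans ?_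
    have heq : t / c N * Real.exp (t * q) * d N = t * Real.exp (t * q) * (d N / c N) := by
      field_simp
    rw [hf1]
    exact le_of_eq heq
  -- rewriting powers of exponentials
  have hexpkc : ∀ N, (NormedSpace.exp (c N • Q)) ^ (k N)
      = NormedSpace.exp (((k N : ℝ) * c N) • Q) := by
    intro N
    rw [← Matrix.exp_nsmul]
    congr 1
    rw [← Nat.cast_smul_eq_nsmul ℝ, smul_smul]
  -- bound 2
  have hbound2 : ∀ N,
      ‖(1 + c N • Q) ^ (k N) - (NormedSpace.exp (c N • Q)) ^ (k N)‖ ≤ f2 N := by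
    intro N
    set m : ℝ := Real.exp (c N * q) with hm
    have hcq0 : 0 ≤ c N * q := mul_nonneg (hc_pos N).le hq0
    have hm1 : 1 ≤ m := Real.one_le_exp hcq0
    have hA : ‖(1 : Matrix ι ι ℝ) + c N • Q‖ ≤ m := by
      refine (hnorm1cQ N).trans ?_
      have := Real.add_one_le_exp (c N * q)
      rw [hm]; linarith
    have hB : ‖NormedSpace.exp (c N • Q)‖ ≤ m := by
      have h := aux_norm_exp_le (c N • Q)
      rwa [norm_smul, Real.norm_eq_abs, abs_of_pos (hc_pos N)] at h
    have h1 := aux_norm_pow_sub_pow_le (1 + c N • Q) (NormedSpace.exp (c N • Q))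
      m hm1 hA hB (k N)
    have hdiff : ‖(1 + c N • Q) - NormedSpace.exp (c N • Q)‖ ≤ (c N * q) ^ 2 * m := by
      have h2 := aux_norm_exp_sub_one_sub_le (c N • Q)
      rw [norm_smul, Real.norm_eq_abs, abs_of_pos (hc_pos N)] at h2
      have h3 : (1 + c N • Q) - NormedSpace.exp (c N • Q)
          = -(NormedSpace.exp (c N • Q) - 1 - c N • Q) := by abel
      rw [h3, norm_neg, hm]
      exact h2
    refine h1.trans ?_
    have step : (k N : ℝ) * m ^ (k N) * ‖(1 + c N • Q) - NormedSpace.exp (c N • Q)‖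
        ≤ (t / c N) * Real.exp (t * q) * ((c N * q) ^ 2 * m) := by
      refine mul_le_mul ?_ hdiff (norm_nonneg _) ?_
      · exact mul_le_mul (hk_le N) (hexp_pow N) (pow_nonneg (by linarith) _)
          (div_nonneg ht (hc_pos N).le)
      · exact mul_nonneg (div_nonneg ht (hc_pos N).le) (Real.exp_pos _).le
    refine step.trans (le_of_eq ?_)
    simp only [hf2, hm]
    rw [show (t + c N) * q = t * q + c N * q by ring, Real.exp_add]
    have hcne := (hc_pos N).ne'
    field_simp
  -- triangle inequality and conclusion
  have htri : ∀ N, ‖P N ^ (k N) - NormedSpace.exp (t • Q)‖ ≤ f1 N + f2 N + f3 N := by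
    intro N
    have e1 : P N ^ (k N) - NormedSpace.exp (t • Q)
        = (P N ^ (k N) - (1 + c N • Q) ^ (k N))
          + ((1 + c N • Q) ^ (k N) - (NormedSpace.exp (c N • Q)) ^ (k N))
          + ((NormedSpace.exp (c N • Q)) ^ (k N) - NormedSpace.exp (t • Q)) := by
      abel
    have e2 : ‖(NormedSpace.exp (c N • Q)) ^ (k N) - NormedSpace.exp (t • Q)‖ = f3 N := by
      rw [hf3, hexpkc N]
    calc ‖P N ^ (k N) - NormedSpace.exp (t • Q)‖
        ≤ ‖(P N ^ (k N) - (1 + c N • Q) ^ (k N))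
            + ((1 + c N • Q) ^ (k N) - (NormedSpace.exp (c N • Q)) ^ (k N))‖
          + ‖(NormedSpace.exp (c N • Q)) ^ (k N) - NormedSpace.exp (t • Q)‖ := by
          rw [e1]; exact norm_add_le _ _
      _ ≤ (‖P N ^ (k N) - (1 + c N • Q) ^ (k N)‖
            + ‖(1 + c N • Q) ^ (k N) - (NormedSpace.exp (c N • Q)) ^ (k N)‖)
          + ‖(NormedSpace.exp (c N • Q)) ^ (k N) - NormedSpace.exp (t • Q)‖ :=
          add_le_add_left (norm_add_le _ _) _
      _ ≤ f1 N + f2 N + f3 N := by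
          rw [e2]
          exact add_le_add_left (add_le_add (hbound1 N) (hbound2 N)) _
  refine tendsto_iff_norm_sub_tendsto_zero.mpr ?_
  refine squeeze_zero (fun N => norm_nonneg _) htri ?_
  have := (hlim1.add hlim2).add hlim3
  simpa using this
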